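/- Alternative representation of the asymptotic bias: for all n ∈ ℕ, λ ∈ ℕ, z_{0:n−1} ∈ Z^n, and bounded measurable h on X, the asymptotic bias B_λ⟨z_{0:n−1}⟩(h) = σ²⟨z_{0:n−1}⟩(h) − σ²_{⌊n⌋_λ}⟨z_{0:n−1}⟩(h) admits the representation B_λ⟨z_{0:n−1}⟩(h) = Σ_{m=0}^{⌊n⌋_λ − 1} ∫ η⟨z_{0:m−1}⟩(dx) ( Δ_{δ_x, η⟨z_{0:m−1}⟩}⟨z_{m:n−1}⟩(h, 1_X) / (∏_{ℓ=m}^{n−1} η⟨z_{0:ℓ−1}⟩g_{z_ℓ})² )², where Δ_{μ,μ'}⟨z_{ℓ:m−1}⟩(h, h') = μQ⟨z_{ℓ:m−1}⟩h · μ'Q⟨z_{ℓ:m−1}⟩h' − μQ⟨z_{ℓ:m−1}⟩h' · μ'Q⟨z_{ℓ:m−1}⟩h for probability measures μ, μ' on (X,𝒳). -/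

import Mathlib

noncomputable section

section FeynmanKac
open MeasureTheory ProbabilityTheory

variable {X Z : Type*} [MeasurableSpace X] [MeasurableSpace Z]

/-- The unnormalised Feynman-Kac operator `Q⟨z_{k:k+len-1}⟩` acting on functions:
`Q⟨z_{k:m}⟩h(x) = g_{z_k}(x) ∫ Q⟨z_{k+1:m}⟩h(y) M(x,dy)`, the identity when `len = 0`. -/
def Qop (M : Kernel X X) (g : Z → X → ℝ) (z : ℕ → Z) (k len : ℕ) (h : X → ℝ) : X → ℝ :=
  (List.range len).foldr (fun i acc x => g (z (k + i)) x * ∫ y, acc y ∂(M x)) h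

/-- `γ⟨z_{0:n-1}⟩h = χQ⟨z_{0:n-1}⟩h`. -/
def gammaFK (χ : Measure X) (M : Kernel X X) (g : Z → X → ℝ) (z : ℕ → Z)
    (n : ℕ) (h : X → ℝ) : ℝ :=
  ∫ x, Qop M g z 0 n h x ∂χ

/-- The predictor functional `η⟨z_{0:n-1}⟩h = χQ⟨z_{0:n-1}⟩h / χQ⟨z_{0:n-1}⟩1`. -/
def etaFK (χ : Measure X) (M : Kernel X X) (g : Z → X → ℝ) (z : ℕ → Z)
    (n : ℕ) (h : X → ℝ) : ℝ :=
  gammaFK χ M g z n h / gammaFK χ M g z n (fun _ => 1)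

/-- The truncated asymptotic variance
`σ²_ℓ⟨z_{0:n-1}⟩(h) = Σ_{m=ℓ}^n η⟨z_{0:m-1}⟩({Q⟨z_{m:n-1}⟩(h - η⟨z_{0:n-1}⟩h)}²)
  / (η⟨z_{0:m-1}⟩Q⟨z_{m:n-1}⟩1)²`. -/
def sigmaSq (χ : Measure X) (M : Kernel X X) (g : Z → X → ℝ) (z : ℕ → Z)
    (ℓ n : ℕ) (h : X → ℝ) : ℝ :=
  ∑ m ∈ Finset.Icc ℓ n,
    etaFK χ M g z m
        (fun x => (Qop M g z m (n - m) (fun y => h y - etaFK χ M g z n h) x) ^ 2)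
      / (etaFK χ M g z m (Qop M g z m (n - m) (fun _ => 1))) ^ 2

/-- Sup norm `‖h‖_∞` of a (bounded) function. -/
def supn {Y : Type*} (h : Y → ℝ) : ℝ := sSup (Set.range fun x => |h x|)

end FeynmanKac

section AuxLemmas
open MeasureTheory ProbabilityTheory
set_option linter.unusedSectionVars false

variable {X Z : Type*} [MeasurableSpace X] [MeasurableSpace Z]

variable {M : Kernel X X} {g : Z → X → ℝ} {z : ℕ → Z}

lemma Qop_succ (k len : ℕ) (h : X → ℝ) :
    Qop M g z k (len+1) h = fun x => g (z k) x * ∫ y, Qop M g z (k+1) len h y ∂(M x) := by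
  have key : ∀ (h' : X → ℝ),
      (List.range len).foldr (fun i acc x => g (z (k + (i+1))) x * ∫ y, acc y ∂(M x)) h'
        = Qop M g z (k+1) len h' := by
    intro h'
    unfold Qop
    congr 1
    funext i acc
    rw [show k + (i+1) = k + 1 + i by omega]
  unfold Qop
  rw [List.range_succ_eq_map]
  simp only [List.foldr_cons, List.foldr_map, Nat.add_zero, Nat.succ_eq_add_one]
  rw [key h]; rfl

set_option linter.unusedSectionVars false

lemma Qop_comp (k a b : ℕ) (h : X → ℝ) :
    Qop M g z k (a + b) h = Qop M g z k a (Qop M g z (k + a) b h) := by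
  induction a generalizing k with
  | zero => simp [Qop]
  | succ a ih =>
    rw [show a + 1 + b = (a + b) + 1 by omega, Qop_succ, Qop_succ, ih (k+1),
      show k + 1 + a = k + (a + 1) by omega]

lemma Qop_prop [IsMarkovKernel M] (hg : ∀ zz, Measurable (g zz))
    (hgb : ∀ zz, ∃ c, ∀ x, g zz x ≤ c) (hgpos : ∀ zz x, 0 < g zz x)
    (k len : ℕ) {h : X → ℝ} {c : ℝ} (hh : Measurable h) (hc : ∀ x, |h x| ≤ c) :
    Measurable (Qop M g z k len h) ∧ ∃ C, ∀ x, |Qop M g z k len h x| ≤ C := by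
  induction len generalizing k with
  | zero => exact ⟨hh, c, hc⟩
  | succ n ih =>
    obtain ⟨hm, C, hC⟩ := ih (k+1)
    rw [Qop_succ]
    obtain ⟨cg, hcg⟩ := hgb (z k)
    have hint : Measurable fun x => ∫ y, Qop M g z (k+1) n h y ∂(M x) :=
      (MeasureTheory.StronglyMeasurable.integral_kernel_prod_right
        (f := fun (_ : X) y => Qop M g z (k+1) n h y)
        (hm.stronglyMeasurable.comp_measurable measurable_snd)).measurable
    refine ⟨((hg (z k)).mul hint), cg * C, fun x => ?_⟩
    have h1 : |∫ y, Qop M g z (k+1) n h y ∂(M x)| ≤ C := by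
      have := MeasureTheory.norm_integral_le_of_norm_le_const
        (μ := M x) (f := Qop M g z (k+1) n h) (C := C)
        (Filter.Eventually.of_forall fun y => by rw [Real.norm_eq_abs]; exact hC y)
      simpa [Real.norm_eq_abs, measure_univ] using this
    have hgx := (hgpos (z k) x).le
    calc |g (z k) x * ∫ y, Qop M g z (k+1) n h y ∂(M x)|
        = g (z k) x * |∫ y, Qop M g z (k+1) n h y ∂(M x)| := by
          rw [abs_mul, abs_of_nonneg hgx]
      _ ≤ cg * C := by
          apply mul_le_mul (hcg x) h1 (abs_nonneg _)
          exact le_trans hgx (hcg x)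

lemma Qop_integrable {h : X → ℝ} (hm : Measurable h) {C : ℝ}
    (hC : ∀ x, |h x| ≤ C) (μ : Measure X) [IsProbabilityMeasure μ] :
    MeasureTheory.Integrable h μ := by
  refine (MeasureTheory.integrable_const C).mono' hm.aestronglyMeasurable ?_
  exact Filter.Eventually.of_forall fun y => by rw [Real.norm_eq_abs]; exact hC y

lemma Qop_one_pos [IsMarkovKernel M] (hg : ∀ zz, Measurable (g zz))
    (hgb : ∀ zz, ∃ c, ∀ x, g zz x ≤ c) (hgpos : ∀ zz x, 0 < g zz x)
    (k len : ℕ) (x : X) : 0 < Qop M g z k len (fun _ => 1) x := by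
  induction len generalizing k x with
  | zero => norm_num [Qop]
  | succ n ih =>
    rw [Qop_succ]
    refine mul_pos (hgpos (z k) x) ?_
    obtain ⟨hm, C, hC⟩ := Qop_prop (M := M) (z := z) hg hgb hgpos (k+1) n
      (h := fun _ => (1:ℝ)) (c := 1) measurable_const (fun _ => by norm_num)
    have hint : MeasureTheory.Integrable (Qop M g z (k+1) n (fun _ => 1)) (M x) :=
      Qop_integrable hm hC (M x)
    rw [MeasureTheory.integral_pos_iff_support_of_nonneg (fun y => (ih (k+1) y).le) hint]
    have : Function.support (Qop M g z (k+1) n (fun _ => 1)) = Set.univ :=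
      Set.eq_univ_of_forall fun y => ne_of_gt (ih (k+1) y)
    simp [this]

lemma Qop_const_mul (k len : ℕ) (a : ℝ) (h : X → ℝ) :
    Qop M g z k len (fun y => a * h y) = fun x => a * Qop M g z k len h x := by
  induction len generalizing k with
  | zero => rfl
  | succ n ih =>
    rw [Qop_succ, Qop_succ, ih (k+1)]
    funext x
    rw [MeasureTheory.integral_const_mul]
    ring

lemma Qop_sub_const [IsMarkovKernel M] (hg : ∀ zz, Measurable (g zz))
    (hgb : ∀ zz, ∃ c, ∀ x, g zz x ≤ c) (hgpos : ∀ zz x, 0 < g zz x)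
    (k len : ℕ) {h : X → ℝ} {c : ℝ} (hh : Measurable h) (hc : ∀ x, |h x| ≤ c) (a : ℝ) :
    Qop M g z k len (fun y => h y - a) = fun x =>
      Qop M g z k len h x - a * Qop M g z k len (fun _ => 1) x := by
  induction len generalizing k with
  | zero => funext x; simp [Qop]
  | succ n ih =>
    rw [Qop_succ, Qop_succ, Qop_succ, ih (k+1)]
    funext x
    obtain ⟨hm1, C1, hC1⟩ := Qop_prop (M := M) (z := z) hg hgb hgpos (k+1) n hh hc
    obtain ⟨hm2, C2, hC2⟩ := Qop_prop (M := M) (z := z) hg hgb hgpos (k+1) n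
      (h := fun _ => (1:ℝ)) (c := 1) measurable_const (fun _ => by norm_num)
    rw [MeasureTheory.integral_sub (Qop_integrable hm1 hC1 (M x))
      ((Qop_integrable hm2 hC2 (M x)).const_mul a), MeasureTheory.integral_const_mul]
    ring

variable {χ : Measure X} [IsProbabilityMeasure χ] [IsMarkovKernel M]
variable (hg : ∀ zz, Measurable (g zz)) (hgb : ∀ zz, ∃ c, ∀ x, g zz x ≤ c)
  (hgpos : ∀ zz x, 0 < g zz x)

lemma gamma_comp (m r : ℕ) (h : X → ℝ) :
    gammaFK χ M g z (m + r) h = gammaFK χ M g z m (Qop M g z m r h) := by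
  unfold gammaFK
  rw [Qop_comp 0 m r, Nat.zero_add]

lemma Qop_one_apply_one [IsMarkovKernel M] (m : ℕ) :
    Qop M g z m 1 (fun _ => (1:ℝ)) = g (z m) := by
  funext x
  rw [Qop_succ]
  simp [Qop]

include hg hgb hgpos

lemma gamma_one_pos (m : ℕ) : 0 < gammaFK χ M g z m (fun _ => 1) := by
  obtain ⟨hm, C, hC⟩ := Qop_prop (M := M) (z := z) hg hgb hgpos 0 m
    (h := fun _ => (1:ℝ)) (c := 1) measurable_const (fun _ => by norm_num)
  unfold gammaFK
  rw [MeasureTheory.integral_pos_iff_support_of_nonneg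
    (fun y => (Qop_one_pos hg hgb hgpos 0 m y).le) (Qop_integrable hm hC χ)]
  have : Function.support (Qop M g z 0 m (fun _ => 1)) = Set.univ :=
    Set.eq_univ_of_forall fun y => ne_of_gt (Qop_one_pos hg hgb hgpos 0 m y)
  simp [this]

lemma gamma_succ_one (m : ℕ) :
    gammaFK χ M g z (m + 1) (fun _ => 1) = gammaFK χ M g z m (g (z m)) := by
  rw [gamma_comp m 1, Qop_one_apply_one (M := M) (z := z) (g := g) m]

lemma eta_prod_g (m n : ℕ) (hmn : m ≤ n) :
    ∏ ℓ ∈ Finset.Ico m n, etaFK χ M g z ℓ (g (z ℓ))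
      = gammaFK χ M g z n (fun _ => 1) / gammaFK χ M g z m (fun _ => 1) := by
  induction n, hmn using Nat.le_induction with
  | base => simp [div_self (ne_of_gt (gamma_one_pos (χ := χ) (M := M) (z := z) hg hgb hgpos m))]
  | succ n hmn ih =>
    have hn := ne_of_gt (gamma_one_pos (χ := χ) (M := M) (z := z) hg hgb hgpos n)
    have hm := ne_of_gt (gamma_one_pos (χ := χ) (M := M) (z := z) hg hgb hgpos m)
    rw [Finset.prod_Ico_succ_top hmn, ih, etaFK,
      ← gamma_succ_one (χ := χ) (M := M) (z := z) hg hgb hgpos n]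
    field_simp

lemma eta_const_mul (m : ℕ) (a : ℝ) (f : X → ℝ) :
    etaFK χ M g z m (fun x => a * f x) = a * etaFK χ M g z m f := by
  unfold etaFK gammaFK
  simp only [Qop_const_mul, MeasureTheory.integral_const_mul, mul_div_assoc]


end AuxLemmas

section Thm
open MeasureTheory ProbabilityTheory

variable {X Z : Type*} [MeasurableSpace X] [MeasurableSpace Z]

/-- `Δ_{μ,μ'}⟨z_{k:k+len-1}⟩(h,h') = μQh ⋅ μ'Qh' - μQh' ⋅ μ'Qh`, where the (probability)
measures `μ`, `μ'` are represented by their integration functionals. -/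
def DeltaFK (M : Kernel X X) (g : Z → X → ℝ) (z : ℕ → Z) (k len : ℕ)
    (μ μ' : (X → ℝ) → ℝ) (h h' : X → ℝ) : ℝ :=
  μ (Qop M g z k len h) * μ' (Qop M g z k len h')
    - μ (Qop M g z k len h') * μ' (Qop M g z k len h)

/-- **Alternative representation of the asymptotic bias** (display (23) of Olsson & Douc):
`B_λ⟨z_{0:n-1}⟩(h) = Σ_{m=0}^{⌊n⌋_λ-1} ∫ η⟨z_{0:m-1}⟩(dx)
  (Δ_{δ_x, η⟨z_{0:m-1}⟩}⟨z_{m:n-1}⟩(h, 1) / (∏_{ℓ=m}^{n-1} η⟨z_{0:ℓ-1}⟩g_{z_ℓ})²)²`. -/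
theorem bias_alternative_representation
    (M : Kernel X X) [IsMarkovKernel M] (χ : Measure X) [IsProbabilityMeasure χ]
    (g : Z → X → ℝ) (hgmeas : ∀ zz, Measurable (g zz))
    (hgpos : ∀ zz x, 0 < g zz x) (hgbdd : ∀ zz, ∃ c, ∀ x, g zz x ≤ c)
    (z : ℕ → Z) (n lam : ℕ) (h : X → ℝ) (hh : Measurable h) (hhbdd : ∃ c, ∀ x, |h x| ≤ c) :
    sigmaSq χ M g z 0 n h - sigmaSq χ M g z (n - lam) n h
      = ∑ m ∈ Finset.range (n - lam),
          etaFK χ M g z m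
            (fun x =>
              (DeltaFK M g z m (n - m) (fun f => f x) (etaFK χ M g z m) h (fun _ => 1)
                  / (∏ ℓ ∈ Finset.Ico m n, etaFK χ M g z ℓ (g (z ℓ))) ^ 2) ^ 2) := by
  obtain ⟨ch, hch⟩ := hhbdd
  -- split the sums
  unfold sigmaSq
  rw [show (0:ℕ) = 0 from rfl]
  rw [← Finset.Ico_add_one_right_eq_Icc 0 n, ← Finset.Ico_add_one_right_eq_Icc (n - lam) n]
  rw [← Finset.sum_Ico_consecutive _ (Nat.zero_le (n - lam)) (by omega : n - lam ≤ n + 1)]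
  rw [add_sub_cancel_right, ← Finset.range_eq_Ico]
  refine Finset.sum_congr rfl fun m hm => ?_
  rw [Finset.mem_range] at hm
  have hmn : m ≤ n := le_trans hm.le (Nat.sub_le n lam)
  have hn : n = m + (n - m) := by omega
  have hγm := gamma_one_pos (χ := χ) (M := M) (z := z) hgmeas hgbdd hgpos m
  have hγn := gamma_one_pos (χ := χ) (M := M) (z := z) hgmeas hgbdd hgpos n
  have gQ1 : gammaFK χ M g z m (Qop M g z m (n - m) (fun _ => 1))
      = gammaFK χ M g z n (fun _ => 1) := by
    conv_rhs => rw [hn]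
    rw [gamma_comp]
  have gQh : gammaFK χ M g z m (Qop M g z m (n - m) h) = gammaFK χ M g z n h := by
    conv_rhs => rw [hn]
    rw [gamma_comp]
  have hc : etaFK χ M g z m (Qop M g z m (n - m) (fun _ => 1))
      = gammaFK χ M g z n (fun _ => 1) / gammaFK χ M g z m (fun _ => 1) := by
    rw [etaFK, gQ1]
  have hcpos : 0 < etaFK χ M g z m (Qop M g z m (n - m) (fun _ => 1)) := by
    rw [hc]; exact div_pos hγn hγm
  have hc0 := ne_of_gt hcpos
  have hP : ∏ ℓ ∈ Finset.Ico m n, etaFK χ M g z ℓ (g (z ℓ))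
      = etaFK χ M g z m (Qop M g z m (n - m) (fun _ => 1)) := by
    rw [eta_prod_g hgmeas hgbdd hgpos m n hmn, hc]
  have ha : etaFK χ M g z n h * etaFK χ M g z m (Qop M g z m (n - m) (fun _ => 1))
      = etaFK χ M g z m (Qop M g z m (n - m) h) := by
    simp only [etaFK, gQ1, gQh]
    field_simp
  have hsub := Qop_sub_const (M := M) (z := z) hgmeas hgbdd hgpos m (n - m) hh hch
    (etaFK χ M g z n h)
  have hΔ : ∀ x, DeltaFK M g z m (n - m) (fun f => f x) (etaFK χ M g z m) h (fun _ => 1)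
      = etaFK χ M g z m (Qop M g z m (n - m) (fun _ => 1))
        * Qop M g z m (n - m) (fun y => h y - etaFK χ M g z n h) x := by
    intro x
    simp only [DeltaFK, hsub]
    rw [← ha]
    ring
  have hfun : (fun x =>
        (DeltaFK M g z m (n - m) (fun f => f x) (etaFK χ M g z m) h (fun _ => 1)
          / (etaFK χ M g z m (Qop M g z m (n - m) (fun _ => 1))) ^ 2) ^ 2)
      = fun x => ((etaFK χ M g z m (Qop M g z m (n - m) (fun _ => 1))) ^ 2)⁻¹
          * (Qop M g z m (n - m) (fun y => h y - etaFK χ M g z n h) x) ^ 2 := by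
    funext x
    rw [hΔ x]
    field_simp
  rw [hP, hfun, eta_const_mul hgmeas hgbdd hgpos, inv_mul_eq_div]

end Thm
end
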